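/- Let n be a positive integer. If an element x of the spin group Spin(n) satisfies x·ι(v)·x̄ = ι(v) for every v ∈ ℝⁿ, then x = 1 or x = −1. (That is, the kernel of the double covering λₙ : Spin(n) → SO(n), defined by λₙ(x)v = x·ι(v)·x̄, equals {±1}.) -/

import Mathlib

open CliffordAlgebra

/-- The quadratic form `Q(v) = -∑ i, v i ^ 2` on `ℝⁿ = (Fin n → ℝ)`. -/
noncomputable def Qneg (n : ℕ) : QuadraticForm ℝ (Fin n → ℝ) :=
  QuadraticMap.weightedSumSquares ℝ (fun _ : Fin n => (-1 : ℝ))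

/-- The Clifford algebra `Cₙ` of `Qneg n`. -/
noncomputable abbrev Cl (n : ℕ) := CliffordAlgebra (Qneg n)

/-- The generator `eᵢ = ι(εᵢ)`, the image of the `i`-th standard basis vector. -/
noncomputable def e {n : ℕ} (i : Fin n) : Cl n := ι (Qneg n) (Pi.single i 1)

/-- The Clifford conjugate `x̄ = reverse (involute x)`. -/
noncomputable def conj {n : ℕ} (x : Cl n) : Cl n := reverse (involute x)

/-- `x` lies in the spin group `Spin(n)`: it is a unit with `involute x = x` and `x * x̄ = 1`. -/
def InSpin {n : ℕ} (x : Cl n) : Prop :=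
  IsUnit x ∧ involute x = x ∧ x * conj x = 1

namespace Stmt16Aux

variable {n : ℕ}

/-! ### The quadratic form -/

lemma Qneg_apply (v : Fin n → ℝ) : Qneg n v = -∑ i, v i * v i := by
  simp [Qneg, Finset.sum_neg_distrib]

lemma Qneg_polar (v w : Fin n → ℝ) :
    QuadraticMap.polar (Qneg n) v w = -(2 * ∑ i, v i * w i) := by
  simp only [QuadraticMap.polar, Qneg_apply, Pi.add_apply]
  rw [Finset.mul_sum]
  rw [← Finset.sum_neg_distrib, ← Finset.sum_neg_distrib, ← Finset.sum_neg_distrib,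
    ← Finset.sum_neg_distrib]
  rw [sub_sub, ← Finset.sum_add_distrib, ← Finset.sum_sub_distrib]
  exact Finset.sum_congr rfl fun i _ => by ring

lemma Qneg_single (i : Fin n) : Qneg n (Pi.single i 1) = -1 := by
  rw [Qneg_apply]
  rw [Finset.sum_eq_single i] <;> simp +contextual [Pi.single_apply]

lemma Qneg_polar_single (i : Fin n) (w : Fin n → ℝ) :
    QuadraticMap.polar (Qneg n) (Pi.single i 1) w = -2 * w i := by
  rw [Qneg_polar, Finset.sum_eq_single i]
  · simp
  · intro b _ hb; simp [Pi.single_apply, hb]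
  · simp

/-! ### Signs -/

def sgn (i : Fin n) (S : Finset (Fin n)) : ℝ := (-1 : ℝ) ^ (S.filter (· < i)).card

lemma sgn_ne_zero (i : Fin n) (S : Finset (Fin n)) : sgn i S ≠ 0 := by
  simp [sgn]

lemma sgn_mul_self (i : Fin n) (S : Finset (Fin n)) : sgn i S * sgn i S = 1 := by
  rw [sgn, ← pow_add, ← two_mul, pow_mul]; norm_num

lemma sgn_insert_self (i : Fin n) (S : Finset (Fin n)) : sgn i (insert i S) = sgn i S := by
  simp [sgn, Finset.filter_insert]

lemma sgn_erase_self (i : Fin n) (S : Finset (Fin n)) : sgn i (S.erase i) = sgn i S := by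
  have : (S.erase i).filter (· < i) = S.filter (· < i) := by
    rw [Finset.filter_erase]
    exact Finset.erase_eq_of_notMem (by simp)
  rw [sgn, this, sgn]

lemma sgn_insert_of_not_mem {i j : Fin n} {S : Finset (Fin n)} (hjS : j ∉ S) :
    sgn i (insert j S) = (if j < i then -1 else 1) * sgn i S := by
  rw [sgn, sgn, Finset.filter_insert]
  by_cases h : j < i
  · rw [if_pos h, if_pos h, Finset.card_insert_of_notMem (by simp [hjS]), pow_succ]
    ring
  · rw [if_neg h, if_neg h, one_mul]

lemma sgn_erase_of_mem {i j : Fin n} {S : Finset (Fin n)} (hjS : j ∈ S) :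
    sgn i (S.erase j) = (if j < i then -1 else 1) * sgn i S := by
  conv_rhs => rw [← Finset.insert_erase hjS]
  rw [sgn_insert_of_not_mem (Finset.notMem_erase j S)]
  by_cases h : j < i <;> simp [h]

/-! ### The fermionic operators on `V = Finset (Fin n) → ℝ` -/

def sing (T : Finset (Fin n)) : Finset (Fin n) → ℝ := Pi.single T 1

lemma sing_apply (T S : Finset (Fin n)) : sing T S = if S = T then 1 else 0 :=
  Pi.single_apply T 1 S

def Aop (i : Fin n) : (Finset (Fin n) → ℝ) →ₗ[ℝ] (Finset (Fin n) → ℝ) where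
  toFun f S := if i ∈ S then sgn i S * f (S.erase i) else 0
  map_add' f g := by funext S; by_cases h : i ∈ S <;> simp [h] <;> ring
  map_smul' c f := by funext S; by_cases h : i ∈ S <;> simp [h] <;> ring

def Bop (i : Fin n) : (Finset (Fin n) → ℝ) →ₗ[ℝ] (Finset (Fin n) → ℝ) where
  toFun f S := if i ∈ S then 0 else sgn i S * f (insert i S)
  map_add' f g := by funext S; by_cases h : i ∈ S <;> simp [h] <;> ring
  map_smul' c f := by funext S; by_cases h : i ∈ S <;> simp [h] <;> ring

def Cop (i : Fin n) : (Finset (Fin n) → ℝ) →ₗ[ℝ] (Finset (Fin n) → ℝ) := Aop i - Bop i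

lemma Aop_single (i : Fin n) (T : Finset (Fin n)) :
    Aop i (sing T) =
      if i ∈ T then 0 else sgn i T • sing (insert i T) := by
  funext S
  show (if i ∈ S then sgn i S * sing T (S.erase i) else 0) = _
  by_cases hiT : i ∈ T
  · rw [if_pos hiT]
    by_cases hiS : i ∈ S
    · rw [if_pos hiS]
      have hne : S.erase i ≠ T := fun h => (h ▸ Finset.notMem_erase i S) hiT
      simp [sing_apply, hne]
    · simp [hiS]
  · rw [if_neg hiT]
    by_cases hiS : i ∈ S
    · rw [if_pos hiS]
      by_cases hST : S = insert i T
      · subst hST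
        simp [sing_apply, Finset.erase_insert hiT, sgn_insert_self]
      · have hne : S.erase i ≠ T := fun h => hST (by rw [← h, Finset.insert_erase hiS])
        simp [sing_apply, hne, hST]
    · have hne : S ≠ insert i T := fun h => hiS (h ▸ Finset.mem_insert_self i T)
      simp [hiS, sing_apply, hne]

lemma Bop_single (i : Fin n) (T : Finset (Fin n)) :
    Bop i (sing T) =
      if i ∈ T then sgn i T • sing (T.erase i) else 0 := by
  funext S
  show (if i ∈ S then 0 else sgn i S * sing T (insert i S)) = _
  by_cases hiT : i ∈ T
  · rw [if_pos hiT]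
    by_cases hiS : i ∈ S
    · have hne : S ≠ T.erase i := fun h => Finset.notMem_erase i T (h ▸ hiS)
      simp [hiS, sing_apply, hne]
    · rw [if_neg hiS]
      by_cases hST : S = T.erase i
      · subst hST
        simp [sing_apply, Finset.insert_erase hiT, sgn_erase_self]
      · have hne : insert i S ≠ T := fun h => hST (by rw [← h, Finset.erase_insert hiS])
        simp [sing_apply, hne, hST]
  · rw [if_neg hiT]
    by_cases hiS : i ∈ S
    · simp [hiS]
    · have hne : insert i S ≠ T := fun h => hiT (h ▸ Finset.mem_insert_self i S)
      simp [hiS, sing_apply, hne]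

lemma Cop_single (i : Fin n) (T : Finset (Fin n)) :
    Cop i (sing T) =
      if i ∈ T then -sgn i T • sing (T.erase i)
      else sgn i T • sing (insert i T) := by
  rw [Cop, LinearMap.sub_apply, Aop_single, Bop_single]
  by_cases hiT : i ∈ T <;> simp [hiT, neg_smul]

/-! ### Extensionality on the basis -/

lemma lin_ext {N : Type*} [AddCommGroup N] [Module ℝ N]
    {F G : (Finset (Fin n) → ℝ) →ₗ[ℝ] N}
    (h : ∀ T, F (sing T) = G (sing T)) : F = G := by
  refine (Pi.basisFun ℝ (Finset (Fin n))).ext fun T => ?_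
  simpa [Pi.basisFun_apply, sing] using h T

/-! ### Canonical anticommutation relations -/

lemma erase_erase_comm (i j : Fin n) (T : Finset (Fin n)) :
    (T.erase j).erase i = (T.erase i).erase j := by
  ext k; simp only [Finset.mem_erase]; tauto

lemma insert_insert_comm (i j : Fin n) (T : Finset (Fin n)) :
    insert i (insert j T) = insert j (insert i T) := by
  ext k; simp only [Finset.mem_insert]; tauto

lemma car (i j : Fin n) (f : Finset (Fin n) → ℝ) :
    Cop i (Cop j f) + Cop j (Cop i f) = if i = j then (-2 : ℝ) • f else 0 := by
  have key : (Cop i ∘ₗ Cop j + Cop j ∘ₗ Cop i) =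
      (if i = j then (-2 : ℝ) • (LinearMap.id : (Finset (Fin n) → ℝ) →ₗ[ℝ] _) else 0) := by
    refine lin_ext fun T => ?_
    simp only [LinearMap.add_apply, LinearMap.comp_apply]
    rcases eq_or_ne i j with rfl | hij
    · rw [if_pos rfl]
      by_cases hiT : i ∈ T
      · rw [Cop_single, if_pos hiT]
        simp only [neg_smul, map_neg, map_smul]
        rw [Cop_single, if_neg (Finset.notMem_erase i T), sgn_erase_self,
          Finset.insert_erase hiT]
        simp only [smul_smul, LinearMap.smul_apply, LinearMap.id_apply]
        rw [show -((sgn i T * sgn i T) • sing T) + -((sgn i T * sgn i T) • sing T)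
            = (-2 : ℝ) • (sgn i T * sgn i T) • sing T by module]
        rw [sgn_mul_self, one_smul]
      · rw [Cop_single, if_neg hiT]
        simp only [map_smul]
        rw [Cop_single, if_pos (Finset.mem_insert_self i T), sgn_insert_self,
          Finset.erase_insert hiT]
        simp only [neg_smul, smul_neg, smul_smul, LinearMap.smul_apply, LinearMap.id_apply]
        rw [show -((sgn i T * sgn i T) • sing T) + -((sgn i T * sgn i T) • sing T)
            = (-2 : ℝ) • (sgn i T * sgn i T) • sing T by module]
        rw [sgn_mul_self, one_smul]
        module
    · rw [if_neg hij]
      have hji := hij.symm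
      rcases hij.lt_or_gt with hlt | hlt
      all_goals
        by_cases hiT : i ∈ T <;> by_cases hjT : j ∈ T <;>
          simp [Cop_single, Finset.mem_erase, Finset.mem_insert, hij, hji, hiT, hjT,
            sgn_erase_of_mem, sgn_insert_of_not_mem, hlt, hlt.asymm, hlt.ne, hlt.ne',
            smul_smul, erase_erase_comm i j, insert_insert_comm i j,
            Finset.erase_insert_of_ne hij, Finset.erase_insert_of_ne hji] <;>
        module
  have := LinearMap.congr_fun key f
  simpa [apply_ite (fun (F : (Finset (Fin n) → ℝ) →ₗ[ℝ] (Finset (Fin n) → ℝ)) => F f)] using this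

lemma car2 (i j : Fin n) (f : Finset (Fin n) → ℝ) :
    Bop i (Cop j f) + Cop j (Bop i f) = if i = j then f else 0 := by
  have key : (Bop i ∘ₗ Cop j + Cop j ∘ₗ Bop i) =
      (if i = j then (LinearMap.id : (Finset (Fin n) → ℝ) →ₗ[ℝ] _) else 0) := by
    refine lin_ext fun T => ?_
    simp only [LinearMap.add_apply, LinearMap.comp_apply]
    rcases eq_or_ne i j with rfl | hij
    · rw [if_pos rfl]
      by_cases hiT : i ∈ T
      · rw [Cop_single, if_pos hiT, Bop_single, if_pos hiT]
        simp only [neg_smul, map_neg, map_smul]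
        rw [Bop_single, if_neg (Finset.notMem_erase i T),
          Cop_single, if_neg (Finset.notMem_erase i T), sgn_erase_self,
          Finset.insert_erase hiT]
        simp only [smul_smul, smul_zero, neg_zero, LinearMap.id_apply]
        rw [sgn_mul_self, one_smul, zero_add]
      · rw [Cop_single, if_neg hiT, Bop_single, if_neg hiT]
        simp only [map_smul, map_zero]
        rw [Bop_single, if_pos (Finset.mem_insert_self i T), sgn_insert_self,
          Finset.erase_insert hiT]
        simp only [smul_smul, LinearMap.id_apply]
        rw [sgn_mul_self, one_smul, add_zero]
    · rw [if_neg hij]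
      have hji := hij.symm
      rcases hij.lt_or_gt with hlt | hlt
      all_goals
        by_cases hiT : i ∈ T <;> by_cases hjT : j ∈ T <;>
          simp [Cop_single, Bop_single, Finset.mem_erase, Finset.mem_insert, hij, hji, hiT, hjT,
            sgn_erase_of_mem, sgn_insert_of_not_mem, hlt, hlt.asymm, hlt.ne, hlt.ne',
            smul_smul, erase_erase_comm i j, insert_insert_comm i j,
            Finset.erase_insert_of_ne hij, Finset.erase_insert_of_ne hji] <;>
        module
  have := LinearMap.congr_fun key f
  simpa [apply_ite (fun (F : (Finset (Fin n) → ℝ) →ₗ[ℝ] (Finset (Fin n) → ℝ)) => F f)] using this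

/-! ### The Clifford module structure on `V` -/

noncomputable def rho : (Fin n → ℝ) →ₗ[ℝ] (Finset (Fin n) → ℝ) →ₗ[ℝ] (Finset (Fin n) → ℝ) :=
  ∑ i : Fin n, (LinearMap.proj i).smulRight (Cop i)

lemma rho_apply (m : Fin n → ℝ) (f : Finset (Fin n) → ℝ) :
    rho m f = ∑ i : Fin n, m i • Cop i f := by
  simp [rho, LinearMap.sum_apply]

lemma bop_rho (i : Fin n) (m : Fin n → ℝ) (f : Finset (Fin n) → ℝ) :
    Bop i (rho m f) = m i • f - rho m (Bop i f) := by
  rw [rho_apply, map_sum, rho_apply, eq_sub_iff_add_eq, ← Finset.sum_add_distrib]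
  have : ∀ j : Fin n, j ∈ Finset.univ →
      Bop i (m j • Cop j f) + m j • Cop j (Bop i f)
        = if i = j then m i • f else 0 := by
    intro j _
    rw [map_smul, ← smul_add, car2]
    rcases eq_or_ne i j with rfl | h
    · simp
    · simp [h]
  rw [Finset.sum_congr rfl this, Finset.sum_ite_eq]
  simp

lemma hrho (m : Fin n → ℝ) (f : Finset (Fin n) → ℝ) :
    rho m (rho m f) = Qneg n m • f := by
  have expand : rho m (rho m f) = ∑ i : Fin n, ∑ j : Fin n, (m i * m j) • Cop i (Cop j f) := by
    rw [rho_apply]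
    refine Finset.sum_congr rfl fun i _ => ?_
    rw [rho_apply, map_sum, Finset.smul_sum]
    refine Finset.sum_congr rfl fun j _ => ?_
    rw [map_smul, smul_smul]
  have expand' : rho m (rho m f) = ∑ i : Fin n, ∑ j : Fin n, (m i * m j) • Cop j (Cop i f) := by
    rw [expand, Finset.sum_comm]
    exact Finset.sum_congr rfl fun i _ => Finset.sum_congr rfl fun j _ => by rw [mul_comm]
  have h2 : (2 : ℝ) • rho m (rho m f) = (2 : ℝ) • Qneg n m • f := by
    rw [two_smul]
    nth_rewrite 1 [expand]
    nth_rewrite 1 [expand']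
    rw [← Finset.sum_add_distrib]
    have step : ∀ i : Fin n, i ∈ Finset.univ →
        ((∑ j : Fin n, (m i * m j) • Cop i (Cop j f))
            + ∑ j : Fin n, (m i * m j) • Cop j (Cop i f))
          = (-2 * (m i * m i)) • f := by
      intro i _
      rw [← Finset.sum_add_distrib]
      have inner : ∀ j : Fin n, j ∈ Finset.univ →
          ((m i * m j) • Cop i (Cop j f) + (m i * m j) • Cop j (Cop i f))
            = if i = j then (-2 * (m i * m i)) • f else 0 := by
        intro j _
        rw [← smul_add, car]
        rcases eq_or_ne i j with rfl | h
        · simp [smul_smul]; ring_nf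
        · simp [h]
      rw [Finset.sum_congr rfl inner, Finset.sum_ite_eq]
      simp
    rw [Finset.sum_congr rfl step]
    rw [show ∑ i : Fin n, (-2 * (m i * m i)) • f = (∑ i : Fin n, (-2 * (m i * m i))) • f from
      (Finset.sum_smul).symm]
    rw [Qneg_apply, smul_smul]
    congr 1
    rw [show (2:ℝ) * -∑ i : Fin n, m i * m i = ∑ i : Fin n, -2 * (m i * m i) by
      rw [mul_neg, Finset.mul_sum, ← Finset.sum_neg_distrib]
      exact Finset.sum_congr rfl fun i _ => by ring]
  exact smul_right_injective _ (by norm_num : (2:ℝ) ≠ 0) h2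

/-! ### The fold map `Φ` -/

noncomputable def Phi (x : Cl n) : Finset (Fin n) → ℝ :=
  foldr (Qneg n) rho hrho (sing ∅) x

lemma Phi_algebraMap (r : ℝ) : Phi (algebraMap ℝ (Cl n) r) = r • sing ∅ := by
  rw [Phi, foldr_algebraMap]

lemma Phi_one : Phi (1 : Cl n) = sing ∅ := by
  simpa using Phi_algebraMap (n := n) 1

lemma Phi_add (x y : Cl n) : Phi (x + y) = Phi x + Phi y := by
  simp [Phi]

lemma Phi_sub (x y : Cl n) : Phi (x - y) = Phi x - Phi y := by
  simp [Phi]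

lemma Phi_smul (c : ℝ) (x : Cl n) : Phi (c • x) = c • Phi x := by
  simp [Phi]

lemma Phi_iota_mul (m : Fin n → ℝ) (y : Cl n) :
    Phi (ι (Qneg n) m * y) = rho m (Phi y) := by
  rw [Phi, foldr_mul, foldr_ι]; rfl

lemma Bop_sing_empty (i : Fin n) : Bop i (sing (∅ : Finset (Fin n))) = 0 := by
  rw [Bop_single, if_neg (Finset.notMem_empty i)]

lemma Bop_Phi (i : Fin n) (x : Cl n) :
    Phi (contractLeft (LinearMap.proj i : (Fin n → ℝ) →ₗ[ℝ] ℝ) x) = Bop i (Phi x) := by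
  induction x using CliffordAlgebra.left_induction with
  | algebraMap r =>
      rw [contractLeft_algebraMap, Phi_algebraMap, map_smul, Bop_sing_empty]
      simp [Phi]
  | add x y hx hy => rw [map_add, Phi_add, Phi_add, map_add, hx, hy]
  | ι_mul y m hy =>
      rw [contractLeft_ι_mul, Phi_iota_mul, bop_rho, Phi_sub, Phi_smul, Phi_iota_mul, hy]
      rfl

lemma eq_scalar_of_Bop_zero (f : Finset (Fin n) → ℝ) (h : ∀ i, Bop i f = 0) :
    f = f ∅ • sing ∅ := by
  funext S
  rcases Finset.eq_empty_or_nonempty S with rfl | hS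
  · simp [sing_apply]
  · obtain ⟨i, hi⟩ := hS
    have h0 := congrFun (h i) (S.erase i)
    have : Bop i f (S.erase i) = sgn i (S.erase i) * f (insert i (S.erase i)) := by
      show (if i ∈ S.erase i then 0 else sgn i (S.erase i) * f (insert i (S.erase i))) = _
      rw [if_neg (Finset.notMem_erase i S)]
    rw [this, Finset.insert_erase hi, sgn_erase_self] at h0
    have hfS : f S = 0 := by
      rcases mul_eq_zero.1 h0 with h' | h'
      · exact absurd h' (sgn_ne_zero i S)
      · exact h'
    have hse : sing (∅ : Finset (Fin n)) S = 0 := by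
      rw [sing_apply, if_neg (by rintro rfl; exact absurd hi (Finset.notMem_empty i))]
    simp [hfS, hse]

/-! ### Ordered products of generators -/

noncomputable def eS (S : Finset (Fin n)) : Cl n := ((S.sort (· ≤ ·)).map e).prod

lemma eS_empty : eS (∅ : Finset (Fin n)) = 1 := by simp [eS]

lemma eS_insert {i : Fin n} {S : Finset (Fin n)} (h₁ : ∀ b ∈ S, i ≤ b) (h₂ : i ∉ S) :
    eS (insert i S) = e i * eS S := by
  rw [eS, Finset.sort_insert (· ≤ ·) h₁ h₂, List.map_cons, List.prod_cons, eS]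

lemma e_mul_self (i : Fin n) : e i * e i = algebraMap ℝ (Cl n) (-1) := by
  rw [e, ι_sq_scalar, Qneg_single]

lemma e_anticomm {i j : Fin n} (h : i ≠ j) : e i * e j = -(e j * e i) := by
  have hp := ι_mul_ι_add_swap (Q := Qneg n) (Pi.single i 1) (Pi.single j 1)
  rw [Qneg_polar_single, Pi.single_eq_of_ne h, mul_zero, map_zero] at hp
  exact eq_neg_of_add_eq_zero_left hp

lemma sgn_eq_one_of_min {i : Fin n} {S : Finset (Fin n)} (h : ∀ b ∈ S, i ≤ b) :
    sgn i S = 1 := by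
  have : S.filter (· < i) = ∅ := by
    refine Finset.filter_eq_empty_iff.2 fun b hb => not_lt.2 (h b hb)
  rw [sgn, this]
  simp

lemma mul_eS (i : Fin n) (S : Finset (Fin n)) :
    e i * eS S =
      if i ∈ S then (-sgn i S) • eS (S.erase i) else sgn i S • eS (insert i S) := by
  induction S using Finset.strongInduction with
  | _ S IH =>
    rcases S.eq_empty_or_nonempty with rfl | hS
    · rw [if_neg (Finset.notMem_empty i), sgn_eq_one_of_min (by simp), one_smul,
        eS_insert (by simp) (Finset.notMem_empty i), eS_empty, mul_one]
    · set j := S.min' hS with hj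
      have hjS : j ∈ S := S.min'_mem hS
      have hjle : ∀ b ∈ S.erase j, j ≤ b := fun b hb => S.min'_le b (Finset.mem_of_mem_erase hb)
      have hjlt : ∀ b ∈ S.erase j, j < b := fun b hb =>
        lt_of_le_of_ne (hjle b hb) (Ne.symm (Finset.ne_of_mem_erase hb))
      have hjnS' : j ∉ S.erase j := Finset.notMem_erase j S
      have hSeq : S = insert j (S.erase j) := (Finset.insert_erase hjS).symm
      have heS : eS S = e j * eS (S.erase j) := by
        conv_lhs => rw [hSeq]
        exact eS_insert hjle hjnS'
      rcases lt_trichotomy i j with hij | rfl | hij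
      · -- i < j, so i ∉ S and i is the new minimum
        have hiS : i ∉ S := fun h => absurd (S.min'_le i h) (not_le.2 hij)
        have hmin : ∀ b ∈ S, i ≤ b := fun b hb => le_of_lt (lt_of_lt_of_le hij (S.min'_le b hb))
        rw [if_neg hiS, sgn_eq_one_of_min hmin, one_smul, eS_insert hmin hiS]
      · -- i = j is the minimum
        have hmin : ∀ b ∈ S, j ≤ b := fun b hb => S.min'_le b hb
        rw [if_pos hjS, heS, ← mul_assoc, e_mul_self, sgn_eq_one_of_min hmin, map_neg, map_one,
          neg_one_mul, neg_one_smul]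
      · -- j < i
        have hne : i ≠ j := (Ne.symm hij.ne)
        have hiSe : i ∈ S ↔ i ∈ S.erase j := by
          rw [Finset.mem_erase]; exact ⟨fun h => ⟨hne, h⟩, fun h => h.2⟩
        have IH' := IH (S.erase j) (Finset.erase_ssubset hjS)
        rw [heS, ← mul_assoc, e_anticomm hne, neg_mul, mul_assoc, IH']
        by_cases hiS : i ∈ S
        · have hiS' : i ∈ S.erase j := hiSe.1 hiS
          rw [if_pos hiS', if_pos hiS]
          have hjmem : ∀ b ∈ (S.erase j).erase i, j ≤ b :=
            fun b hb => hjle b (Finset.mem_of_mem_erase hb)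
          have hjne : j ∉ (S.erase j).erase i := fun h => hjnS' (Finset.mem_of_mem_erase h)
          rw [mul_smul_comm, ← eS_insert hjmem hjne, erase_erase_comm i j,
            Finset.insert_erase (Finset.mem_erase.2 ⟨Ne.symm hne, hjS⟩),
            sgn_erase_of_mem hjS, if_pos hij]
          module
        · have hiS' : i ∉ S.erase j := fun h => hiS (hiSe.2 h)
          rw [if_neg hiS', if_neg hiS]
          have hmem : ∀ b ∈ insert i (S.erase j), j ≤ b := by
            intro b hb
            rcases Finset.mem_insert.1 hb with rfl | hb'
            · exact le_of_lt hij
            · exact hjle b hb'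
          have hnmem : j ∉ insert i (S.erase j) := by
            rw [Finset.mem_insert]
            rintro (rfl | hmem')
            · exact hne rfl
            · exact hjnS' hmem'
          rw [mul_smul_comm, ← eS_insert hmem hnmem, insert_insert_comm j i, ← hSeq,
            sgn_erase_of_mem hjS, if_pos hij]
          module

/-! ### The map `Ψ` back to the Clifford algebra -/

noncomputable def Psi : (Finset (Fin n) → ℝ) →ₗ[ℝ] Cl n where
  toFun g := ∑ S : Finset (Fin n), g S • eS S
  map_add' f g := by
    simp only [Pi.add_apply, add_smul]
    rw [Finset.sum_add_distrib]
  map_smul' c f := by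
    simp only [Pi.smul_apply, smul_eq_mul, RingHom.id_apply, Finset.smul_sum, smul_smul]

lemma Psi_single (T : Finset (Fin n)) : Psi (sing T) = eS T := by
  show (∑ S : Finset (Fin n), sing T S • eS S) = eS T
  rw [Finset.sum_eq_single T]
  · rw [sing_apply, if_pos rfl, one_smul]
  · intro b _ hb
    rw [sing_apply, if_neg hb, zero_smul]
  · intro h
    exact absurd (Finset.mem_univ T) h

lemma Psi_Cop (i : Fin n) (T : Finset (Fin n)) :
    Psi (Cop i (sing T)) = e i * eS T := by
  rw [Cop_single, mul_eS]
  by_cases hiT : i ∈ T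
  · rw [if_pos hiT, if_pos hiT, map_smul, Psi_single]
  · rw [if_neg hiT, if_neg hiT, map_smul, Psi_single]

lemma iota_eq_sum (m : Fin n → ℝ) :
    ι (Qneg n) m = ∑ i : Fin n, m i • e i := by
  have : m = ∑ i : Fin n, Pi.single i (m i) := (Finset.univ_sum_single m).symm
  conv_lhs => rw [this]
  rw [map_sum]
  refine Finset.sum_congr rfl fun i _ => ?_
  rw [e, ← map_smul]
  congr 1
  ext k
  rcases eq_or_ne k i with rfl | h
  · simp
  · simp [Pi.single_eq_of_ne h]

lemma Psi_rho (m : Fin n → ℝ) (g : Finset (Fin n) → ℝ) :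
    Psi (rho m g) = ι (Qneg n) m * Psi g := by
  have key : (Psi ∘ₗ rho m) = (LinearMap.mulLeft ℝ (ι (Qneg n) m)) ∘ₗ Psi := by
    refine lin_ext fun T => ?_
    rw [LinearMap.comp_apply, LinearMap.comp_apply, LinearMap.mulLeft_apply, rho_apply,
      map_sum, Psi_single, iota_eq_sum, Finset.sum_mul]
    refine Finset.sum_congr rfl fun i _ => ?_
    rw [map_smul, Psi_Cop, smul_mul_assoc]
  exact LinearMap.congr_fun key g

lemma PsiPhi (x : Cl n) : Psi (Phi x) = x := by
  induction x using CliffordAlgebra.left_induction with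
  | algebraMap r =>
      rw [Phi_algebraMap, map_smul, Psi_single, eS_empty, Algebra.algebraMap_eq_smul_one]
  | add x y hx hy => rw [Phi_add, map_add, hx, hy]
  | ι_mul y m hy => rw [Phi_iota_mul, Psi_rho, hy]

/-! ### Clifford algebra lemmas : the graded derivation property and supercommutator -/

lemma prodRule (d : Module.Dual ℝ (Fin n → ℝ)) (a b : Cl n) :
    contractLeft d (a * b) = contractLeft d a * b + involute a * contractLeft d b := by
  induction a using CliffordAlgebra.induction generalizing b with
  | algebraMap r =>
      simp [contractLeft_algebraMap_mul, contractLeft_algebraMap]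
  | ι m =>
      rw [contractLeft_ι_mul, contractLeft_ι, involute_ι, Algebra.smul_def, neg_mul,
        sub_eq_add_neg]
  | mul a₁ a₂ h₁ h₂ =>
      have hmul : involute (a₁ * a₂) = involute a₁ * involute a₂ := map_mul _ _ _
      rw [mul_assoc, h₁ (a₂ * b), h₂ b, h₁ a₂, hmul]
      noncomm_ring
  | add a₁ a₂ h₁ h₂ =>
      rw [add_mul, map_add, h₁, h₂, map_add, map_add, add_mul]
      noncomm_ring

lemma superc (v : Fin n → ℝ) (x : Cl n) :
    ι (Qneg n) v * x =
      involute x * ι (Qneg n) v + contractLeft ((QuadraticMap.polarBilin (Qneg n)) v) x := by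
  induction x using CliffordAlgebra.induction with
  | algebraMap r =>
      rw [contractLeft_algebraMap, add_zero]
      simp [Algebra.commutes]
  | ι w =>
      rw [contractLeft_ι, involute_ι, QuadraticMap.polarBilin_apply_apply, neg_mul]
      have h2 := eq_sub_of_add_eq (ι_mul_ι_add_swap (Q := Qneg n) v w)
      rw [h2, sub_eq_neg_add]
  | mul a b ha hb =>
      have hd := prodRule ((QuadraticMap.polarBilin (Qneg n)) v) a b
      have hmul : involute (a * b) = involute a * involute b := map_mul _ _ _
      rw [← mul_assoc, ha, add_mul, mul_assoc, hb, hd, hmul]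
      noncomm_ring
  | add a b ha hb =>
      rw [mul_add, ha, hb, map_add, map_add, add_mul]
      abel

end Stmt16Aux

open Stmt16Aux in
/-- The kernel of the double covering `λₙ : Spin(n) → SO(n)` is `{±1}`: if `x ∈ Spin(n)`
satisfies `x · ι(v) · x̄ = ι(v)` for all `v ∈ ℝⁿ`, then `x = 1` or `x = -1`. -/
theorem stmt16 (n : ℕ) (hn : 0 < n) (x : Cl n) (hx : InSpin x)
    (hfix : ∀ v : Fin n → ℝ, x * ι (Qneg n) v * conj x = ι (Qneg n) v) :
    x = 1 ∨ x = -1 := by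
  obtain ⟨hu, hinv, hcc⟩ := hx
  obtain ⟨u, hu'⟩ := hu
  have hcx : conj x * x = 1 := by
    have h1 : (↑u : Cl n) * conj x = 1 := by rw [hu']; exact hcc
    have h2 : (↑u⁻¹ : Cl n) = conj x := Units.inv_eq_of_mul_eq_one_right h1
    rw [← h2, ← hu', Units.inv_mul]
  have hcomm : ∀ v : Fin n → ℝ, ι (Qneg n) v * x = x * ι (Qneg n) v := by
    intro v
    have h := congrArg (· * x) (hfix v)
    rw [mul_assoc (x * ι (Qneg n) v), hcx, mul_one] at h
    exact h.symm
  have hcontr : ∀ i : Fin n, contractLeft (LinearMap.proj i : (Fin n → ℝ) →ₗ[ℝ] ℝ) x = 0 := by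
    intro i
    have hs := superc (Pi.single i 1) x
    rw [hinv, ← hcomm (Pi.single i 1)] at hs
    have h0 : contractLeft ((QuadraticMap.polarBilin (Qneg n)) (Pi.single i 1)) x = 0 :=
      (left_eq_add.1 hs)
    have hpb : (QuadraticMap.polarBilin (Qneg n)) (Pi.single i 1)
        = (-2 : ℝ) • (LinearMap.proj i : (Fin n → ℝ) →ₗ[ℝ] ℝ) := by
      refine LinearMap.ext fun w => ?_
      rw [QuadraticMap.polarBilin_apply_apply, Qneg_polar_single]
      simp
    rw [hpb, map_smul] at h0
    rw [LinearMap.smul_apply] at h0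
    rcases smul_eq_zero.1 h0 with h' | h'
    · norm_num at h'
    · exact h'
  have hB : ∀ i, Bop i (Phi x) = 0 := fun i => by
    rw [← Bop_Phi, hcontr i]
    simp [Phi]
  have hf := eq_scalar_of_Bop_zero _ hB
  set c := Phi x ∅ with hc
  have hxc : x = algebraMap ℝ (Cl n) c := by
    have hps := PsiPhi x
    rw [hf] at hps
    rw [← hps, map_smul, Psi_single, eS_empty, Algebra.algebraMap_eq_smul_one]
  have hcconj : conj (algebraMap ℝ (Cl n) c) = algebraMap ℝ (Cl n) c := by
    rw [conj]; simp
  rw [hxc, hcconj, ← map_mul] at hcc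
  have h1 : c * c = 1 := by
    have h := congrArg Phi hcc
    rw [Phi_algebraMap, Phi_one] at h
    have := congrFun h ∅
    simpa [sing_apply] using this
  rcases mul_self_eq_one_iff.1 h1 with h' | h'
  · left; rw [hxc, h', map_one]
  · right; rw [hxc, h', map_neg, map_one]
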